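/- arXiv:0803.2311 — 2 statements merged into one kernel-verified Lean document; each statement's English description precedes it below -/
import Mathlib

section
/- Let μ = (μ'₁,…,μ'ₖ,1,…,1) with l trailing parts equal to 1 and each μ'ᵢ ≥ 1. For any filling T of μ, splitting T into the filling T' of shape (μ'₁,…,μ'ₖ) (bottom k rows) and the filling T'' of shape (1^l) (top l rows, a single column), we have inv(T) = inv(T') + inv(T'') and maj(T) ≡ maj(T') + maj(T'') (mod l). -/
/-!  Fillings of Young diagrams (French convention, rows indexed from the
bottom starting at `0`) and the Haglund–Haiman–Loehr statistics.  A shape is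
a list of row lengths (a partition read bottom-up, so weakly decreasing),
and a filling is a function assigning an integer to each cell `(i, j)`
(row `i`, column `j`, both `0`-based). -/

/-- A filling: an integer entry for every potential cell. -/
abbrev Fill := ℕ × ℕ → ℤ

/-- Length of the `i`-th row of the shape `μ`. -/
def rowLen (μ : List ℕ) (i : ℕ) : ℕ := μ.getD i 0

/-- The cells of the shape `μ`. -/
def cells (μ : List ℕ) : Finset (ℕ × ℕ) :=
  (Finset.range μ.length).biUnion fun i =>
    (Finset.range (rowLen μ i)).image fun j => (i, j)

/-- The leg of a cell: the number of cells of `μ` strictly above it. -/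
def leg (μ : List ℕ) (c : ℕ × ℕ) : ℕ :=
  ((Finset.range μ.length).filter fun i' => c.1 < i' ∧ c.2 < rowLen μ i').card

/-- The arm of a cell: the number of cells strictly to its right. -/
def arm (μ : List ℕ) (c : ℕ × ℕ) : ℕ := rowLen μ c.1 - c.2 - 1

/-- `DesRow μ T i`: columns `j` such that the cell `(i, j)` is a descent,
i.e. `T (i, j) > T (i-1, j)` (nonempty only for `i ≥ 1`). -/
def DesRow (μ : List ℕ) (T : Fill) (i : ℕ) : Finset ℕ :=
  (Finset.range (rowLen μ i)).filter fun j => T (i - 1, j) < T (i, j)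

/-- The contribution `Σ (leg + 1)` of the descents in row `i` to `maj`. -/
def majRow (μ : List ℕ) (T : Fill) (i : ℕ) : ℕ :=
  ∑ j ∈ DesRow μ T i, (leg μ (i, j) + 1)

/-- The sum of the arms of the descents in row `i`. -/
def armRow (μ : List ℕ) (T : Fill) (i : ℕ) : ℕ :=
  ∑ j ∈ DesRow μ T i, arm μ (i, j)

/-- Same-row inversions in row `i`: pairs of columns `j < k` with
`T (i, j) > T (i, k)`. -/
def InvRow (μ : List ℕ) (T : Fill) (i : ℕ) : Finset (ℕ × ℕ) :=
  (Finset.range (rowLen μ i) ×ˢ Finset.range (rowLen μ i)).filter fun p =>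
    p.1 < p.2 ∧ T (i, p.2) < T (i, p.1)

/-- Between-row inversions coming from row `i` (over row `i - 1`): pairs of
columns `j < k` with `T (i, j) > T (i - 1, k)`. -/
def InvBetween (μ : List ℕ) (T : Fill) (i : ℕ) : Finset (ℕ × ℕ) :=
  (Finset.range (rowLen μ i) ×ˢ Finset.range (rowLen μ i)).filter fun p =>
    p.1 < p.2 ∧ T (i - 1, p.2) < T (i, p.1)

/-- The local inversion statistic
`inv_{i,i-1} = |Inv_i| + |Inv_{i,i-1}| − arm_{i,i-1}`. -/
def invRow (μ : List ℕ) (T : Fill) (i : ℕ) : ℤ :=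
  ((InvRow μ T i).card : ℤ) + (InvBetween μ T i).card - armRow μ T i

/-- The major-index statistic `maj(T) = Σ_{u ∈ Des(T)} (leg(u) + 1)`. -/
def maj (μ : List ℕ) (T : Fill) : ℕ :=
  ∑ i ∈ Finset.Ico 1 μ.length, majRow μ T i

/-- The inversion statistic
`inv(T) = |Inv_1(T)| + Σ_{i ≥ 2} inv_{i,i-1}(T)`. -/
def inv (μ : List ℕ) (T : Fill) : ℤ :=
  ((InvRow μ T 0).card : ℤ) + ∑ i ∈ Finset.Ico 1 μ.length, invRow μ T i

/-- The top piece of a filling cut above row `k`, reindexed from row `0`. -/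
def topPart (k : ℕ) (T : Fill) : Fill := fun c => T (c.1 + k, c.2)

section Aux

lemma rowLen_append_left {μ' ν : List ℕ} {i : ℕ} (h : i < μ'.length) :
    rowLen (μ' ++ ν) i = rowLen μ' i := by
  unfold rowLen
  exact List.getD_append μ' ν 0 i h

lemma rowLen_replicate (l i : ℕ) :
    rowLen (List.replicate l 1) i = if i < l then 1 else 0 := by
  unfold rowLen
  rcases lt_or_ge i l with h | h <;>
    simp [List.getD_eq_getElem?_getD, List.getElem?_replicate, h, Nat.not_lt.2 h]

lemma rowLen_tail {μ' : List ℕ} {l i : ℕ} (h1 : μ'.length ≤ i)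
    (h2 : i < μ'.length + l) :
    rowLen (μ' ++ List.replicate l 1) i = 1 := by
  unfold rowLen
  rw [List.getD_append_right]
  · have : (List.replicate l 1).getD (i - μ'.length) 0
        = rowLen (List.replicate l 1) (i - μ'.length) := rfl
    rw [this, rowLen_replicate, if_pos (by omega)]
  · exact h1

lemma invRow_eq_zero {μ : List ℕ} {T : Fill} {i : ℕ} (h : rowLen μ i = 1) :
    invRow μ T i = 0 := by
  have hpair : ∀ (p : ℕ × ℕ), p ∈ Finset.range 1 ×ˢ Finset.range 1 → ¬ p.1 < p.2 := by
    intro p hp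
    simp only [Finset.mem_product, Finset.mem_range, Nat.lt_one_iff] at hp
    omega
  unfold invRow InvRow InvBetween armRow arm
  rw [h]
  rw [Finset.filter_false_of_mem (fun p hp hc => hpair p hp hc.1),
      Finset.filter_false_of_mem (fun p hp hc => hpair p hp hc.1)]
  have : ∑ j ∈ DesRow μ T i, (rowLen μ i - j - 1) = 0 :=
    Finset.sum_eq_zero fun j _ => by rw [h]; omega
  rw [this]
  simp

lemma invRowCard_eq_zero {μ : List ℕ} {T : Fill} {i : ℕ} (h : rowLen μ i = 1) :
    (InvRow μ T i).card = 0 := by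
  have hpair : ∀ (p : ℕ × ℕ), p ∈ Finset.range 1 ×ˢ Finset.range 1 → ¬ p.1 < p.2 := by
    intro p hp
    simp only [Finset.mem_product, Finset.mem_range, Nat.lt_one_iff] at hp
    omega
  unfold InvRow
  rw [h, Finset.filter_false_of_mem (fun p hp hc => hpair p hp hc.1)]
  simp

lemma inv_replicate (l : ℕ) (hl : 0 < l) (S : Fill) :
    inv (List.replicate l 1) S = 0 := by
  unfold inv
  rw [invRowCard_eq_zero (by rw [rowLen_replicate]; simp [hl])]
  rw [Finset.sum_eq_zero, Nat.cast_zero, add_zero]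
  intro i hi
  rw [Finset.mem_Ico, List.length_replicate] at hi
  exact invRow_eq_zero (by rw [rowLen_replicate, if_pos hi.2])

lemma range_split (k l : ℕ) :
    Finset.range (k + l) = Finset.range k ∪ Finset.Ico k (k + l) := by
  rw [Finset.range_eq_Ico, Finset.range_eq_Ico,
      Finset.Ico_union_Ico_eq_Ico (Nat.zero_le k) (Nat.le_add_right k l)]

lemma leg_left {μ' : List ℕ} (l : ℕ) {i : ℕ} (j : ℕ) (hi : i < μ'.length) :
    leg (μ' ++ List.replicate l 1) (i, j)
      = leg μ' (i, j) + if j = 0 then l else 0 := by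
  set k := μ'.length with hk
  unfold leg
  simp only [List.length_append, List.length_replicate]
  rw [range_split, Finset.filter_union, Finset.card_union_of_disjoint]
  · congr 1
    · apply Finset.card_bij (fun a _ => a)
      · intro a ha
        simp only [Finset.mem_filter, Finset.mem_range] at ha ⊢
        exact ⟨ha.1, ha.2.1, by rw [← rowLen_append_left (ν := List.replicate l 1) ha.1]; exact ha.2.2⟩
      · intro a _ b _ h; exact h
      · intro b hb
        simp only [Finset.mem_filter, Finset.mem_range] at hb
        exact ⟨b, by
          simp only [Finset.mem_filter, Finset.mem_range]
          exact ⟨hb.1, hb.2.1, by rw [rowLen_append_left hb.1]; exact hb.2.2⟩, rfl⟩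
    · rw [show ((Finset.Ico k (k + l)).filter fun i' =>
          (i, j).1 < i' ∧ (i, j).2 < rowLen (μ' ++ List.replicate l 1) i')
          = if j = 0 then Finset.Ico k (k + l) else ∅ from ?_]
      · split <;> simp [Nat.card_Ico]
      · split
        · next hj =>
            apply Finset.filter_true_of_mem
            intro x hx
            rw [Finset.mem_Ico] at hx
            refine ⟨by omega, ?_⟩
            rw [rowLen_tail hx.1 hx.2, hj]
            omega
        · next hj =>
            apply Finset.filter_false_of_mem
            intro x hx hc
            rw [Finset.mem_Ico] at hx
            rw [rowLen_tail hx.1 hx.2] at hc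
            omega
  · apply Finset.disjoint_filter_filter
    rw [Finset.range_eq_Ico]
    exact Finset.Ico_disjoint_Ico_consecutive 0 k (k + l)

lemma card_filter_lt (n i : ℕ) :
    ((Finset.range n).filter fun x => i < x).card = n - (i + 1) := by
  have : ((Finset.range n).filter fun x => i < x) = Finset.Ico (i + 1) n := by
    ext x
    simp only [Finset.mem_filter, Finset.mem_range, Finset.mem_Ico]
    omega
  rw [this, Nat.card_Ico]

lemma leg_tail {μ' : List ℕ} {l i : ℕ} (hi : μ'.length ≤ i) :
    leg (μ' ++ List.replicate l 1) (i, 0) = μ'.length + l - (i + 1) := by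
  unfold leg
  simp only [List.length_append, List.length_replicate]
  rw [show ((Finset.range (μ'.length + l)).filter fun i' =>
      (i, 0).1 < i' ∧ (i, 0).2 < rowLen (μ' ++ List.replicate l 1) i')
      = (Finset.range (μ'.length + l)).filter fun i' => i < i' from ?_]
  · exact card_filter_lt _ _
  · apply Finset.filter_congr
    intro x hx
    rw [Finset.mem_range] at hx
    constructor
    · exact fun h => h.1
    · intro h
      exact ⟨h, by rw [rowLen_tail (by omega) hx]; omega⟩

lemma leg_replicate {l t : ℕ} (_ht : t < l) :
    leg (List.replicate l 1) (t, 0) = l - (t + 1) := by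
  unfold leg
  simp only [List.length_replicate]
  rw [show ((Finset.range l).filter fun i' =>
      (t, 0).1 < i' ∧ (t, 0).2 < rowLen (List.replicate l 1) i')
      = (Finset.range l).filter fun i' => t < i' from ?_]
  · exact card_filter_lt _ _
  · apply Finset.filter_congr
    intro x hx
    rw [Finset.mem_range] at hx
    constructor
    · exact fun h => h.1
    · intro h
      exact ⟨h, by rw [rowLen_replicate, if_pos hx]; omega⟩

lemma majRow_single {μ : List ℕ} {T : Fill} {i : ℕ} (h : rowLen μ i = 1) :
    majRow μ T i = if T (i - 1, 0) < T (i, 0) then leg μ (i, 0) + 1 else 0 := by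
  unfold majRow DesRow
  rw [h]
  rw [show Finset.range 1 = {0} from rfl]
  rw [Finset.filter_singleton]
  split <;> simp

end Aux

/-- for `μ = (μ'₁,…,μ'ₖ,1^l)` with every `μ'ᵢ ≥ 1` (so `μ` is a
partition with a tail of `l` rows of length `1` on top), splitting a filling
`T` of `μ` into the filling `T' = T` of shape `μ'` (bottom `k` rows) and the
filling `T''` of shape `(1^l)` (top `l` rows), one has
`inv(T) = inv(T') + inv(T'')` and `maj(T) ≡ maj(T') + maj(T'') (mod l)`. -/
theorem inv_maj_split_column_tail (μ' : List ℕ) (l : ℕ) (hl : 0 < l)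
    (hsort : List.Pairwise (· ≥ ·) μ') (hpos : ∀ m ∈ μ', 1 ≤ m) (T : Fill) :
    inv (μ' ++ List.replicate l 1) T
        = inv μ' T + inv (List.replicate l 1) (topPart μ'.length T) ∧
    (maj (μ' ++ List.replicate l 1) T : ℤ)
        ≡ (maj μ' T : ℤ) + (maj (List.replicate l 1) (topPart μ'.length T) : ℤ)
          [ZMOD (l : ℤ)] := by
  rcases Nat.eq_zero_or_pos μ'.length with hk | hk
  · -- the bottom shape is empty
    have hnil : μ' = [] := List.length_eq_zero_iff.mp hk
    subst hnil
    have htop : topPart ([] : List ℕ).length T = T := by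
      funext c; simp [topPart]
    rw [List.nil_append, htop]
    have hinv0 : inv ([] : List ℕ) T = 0 := by
      unfold inv InvRow
      simp [rowLen]
    have hmaj0 : maj ([] : List ℕ) T = 0 := by
      unfold maj; simp
    refine ⟨by rw [hinv0, zero_add], ?_⟩
    rw [hmaj0]
    rw [Nat.cast_zero, zero_add]
  · -- the bottom shape has k ≥ 1 rows
    set k := μ'.length with hkdef
    set ν := List.replicate l 1 with hν
    set S := topPart k T with hS
    have hlen : (μ' ++ ν).length = k + l := by simp [hν, hkdef]
    -- inversion statistic
    have hinv : inv (μ' ++ ν) T = inv μ' T + inv ν S := by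
      have hinvS : inv ν S = 0 := inv_replicate l hl S
      rw [hinvS, add_zero]
      unfold inv
      have h0 : InvRow (μ' ++ ν) T 0 = InvRow μ' T 0 := by
        unfold InvRow; rw [rowLen_append_left hk]
      rw [h0]
      congr 1
      rw [hlen, ← Finset.sum_Ico_consecutive _ hk (Nat.le_add_right k l)]
      have h2 : ∑ i ∈ Finset.Ico k (k + l), invRow (μ' ++ ν) T i = 0 :=
        Finset.sum_eq_zero fun i hi => by
          rw [Finset.mem_Ico] at hi
          exact invRow_eq_zero (rowLen_tail hi.1 hi.2)
      rw [h2, add_zero]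
      apply Finset.sum_congr rfl
      intro i hi
      rw [Finset.mem_Ico] at hi
      have hik : i < k := hi.2
      simp only [invRow, InvRow, InvBetween, armRow, DesRow, arm,
        rowLen_append_left (ν := ν) hik]
    -- major-index statistic
    have hmaj : ∃ E : ℕ, maj (μ' ++ ν) T = maj μ' T + maj ν S + l * E := by
      refine ⟨(∑ i ∈ Finset.Ico 1 k, if 0 ∈ DesRow μ' T i then 1 else 0)
        + (if T (k - 1, 0) < T (k, 0) then 1 else 0), ?_⟩
      have hA : ∑ i ∈ Finset.Ico 1 k, majRow (μ' ++ ν) T i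
          = (∑ i ∈ Finset.Ico 1 k, majRow μ' T i)
            + l * ∑ i ∈ Finset.Ico 1 k, (if 0 ∈ DesRow μ' T i then 1 else 0) := by
        rw [Finset.mul_sum, ← Finset.sum_add_distrib]
        apply Finset.sum_congr rfl
        intro i hi
        rw [Finset.mem_Ico] at hi
        have hik : i < k := hi.2
        have hDes : DesRow (μ' ++ ν) T i = DesRow μ' T i := by
          unfold DesRow; rw [rowLen_append_left hik]
        unfold majRow
        rw [hDes]
        calc ∑ j ∈ DesRow μ' T i, (leg (μ' ++ ν) (i, j) + 1)
            = ∑ j ∈ DesRow μ' T i,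
                ((leg μ' (i, j) + 1) + if j = 0 then l else 0) := by
              apply Finset.sum_congr rfl
              intro j _
              rw [leg_left l j hik]
              ring
          _ = (∑ j ∈ DesRow μ' T i, (leg μ' (i, j) + 1))
                + ∑ j ∈ DesRow μ' T i, (if j = 0 then l else 0) := by
              rw [Finset.sum_add_distrib]
          _ = (∑ j ∈ DesRow μ' T i, (leg μ' (i, j) + 1))
                + l * (if 0 ∈ DesRow μ' T i then 1 else 0) := by
              rw [Finset.sum_ite_eq' (DesRow μ' T i) 0 (fun _ => l)]
              split <;> ring
      have hB : ∑ i ∈ Finset.Ico k (k + l), majRow (μ' ++ ν) T i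
          = l * (if T (k - 1, 0) < T (k, 0) then 1 else 0)
            + ∑ t ∈ Finset.Ico 1 l, majRow ν S t := by
        rw [Finset.sum_eq_sum_Ico_succ_bot (by omega : k < k + l)]
        congr 1
        · -- junction row
          rw [majRow_single (rowLen_tail le_rfl (by omega)), leg_tail le_rfl]
          split <;> [skip; ring]
          rw [show k + l - (k + 1) + 1 = l from by omega]
          ring
        · -- tail rows
          rw [Finset.sum_Ico_eq_sum_range, Finset.sum_Ico_eq_sum_range]
          rw [show k + l - (k + 1) = l - 1 from by omega]
          apply Finset.sum_congr rfl
          intro i hi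
          rw [Finset.mem_range] at hi
          have hrow1 : rowLen (μ' ++ ν) (k + 1 + i) = 1 :=
            rowLen_tail (by omega) (by omega)
          have hrow2 : rowLen ν (1 + i) = 1 := by
            rw [hν, rowLen_replicate, if_pos (by omega)]
          rw [majRow_single hrow1, majRow_single hrow2]
          rw [leg_tail (by omega : μ'.length ≤ k + 1 + i)]
          rw [hν, leg_replicate (by omega : 1 + i < l)]
          simp only [hS, topPart]
          have e1 : k + 1 + i - 1 = 1 + i - 1 + k := by omega
          have e2 : k + 1 + i = 1 + i + k := by omega
          rw [e1, e2,
            show μ'.length + l - (1 + i + k + 1) + 1 = l - (1 + i + 1) + 1 from by omega]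
      unfold maj
      rw [hlen, ← Finset.sum_Ico_consecutive _ hk (Nat.le_add_right k l), hA, hB,
        hν, List.length_replicate]
      ring
    obtain ⟨E, hE⟩ := hmaj
    refine ⟨hinv, ?_⟩
    refine (Int.modEq_iff_dvd.2 ⟨E, ?_⟩).symm
    have : (maj (μ' ++ ν) T : ℤ) = (maj μ' T : ℤ) + (maj ν S : ℤ) + l * E := by
      exact_mod_cast congrArg (Nat.cast : ℕ → ℤ) hE
    linarith
end

section
/- Let μ = (μ'₁,…,μ'ₖ, 2^l) with μ'ₖ ≥ 2. The map τ defined by Algorithm: starting at row i = k, if rows i and i+1 satisfy condition xAx (when row i+1 has 2 cells and sits above a row with ≥ 2 cells: with top row (a,b) and the cell A below a, a ≤ A < b or b ≤ A < a), swap the two entries of row i+1 and increment i; then while rows i and i+1 satisfy condition xXxX, swap the two entries of row i+1 and increment i; output the resulting filling. Then τ is an involution on the set of fillings of μ of any fixed evaluation; in particular τ is a bijection. -/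
/-- The `xAx` condition on a triple `(a,b,A)`. -/
def xAxP (a b A : ℤ) : Prop := (a ≤ A ∧ A < b) ∨ (b ≤ A ∧ A < a)

instance (a b A : ℤ) : Decidable (xAxP a b A) := by
  unfold xAxP; infer_instance

/-- The `xXxX` condition on a quadruple `(a,b,A,B)`. -/
def xXxXP (a b A B : ℤ) : Prop :=
  (a ≤ A ∧ A < b ∧ b ≤ B) ∨ (A < b ∧ b ≤ B ∧ B < a) ∨
  (b ≤ A ∧ A < a ∧ a ≤ B) ∨ (A < a ∧ a ≤ B ∧ B < b) ∨
  (a ≤ B ∧ B < b ∧ b ≤ A) ∨ (B < b ∧ b ≤ A ∧ A < a) ∨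
  (b ≤ B ∧ B < a ∧ a ≤ A) ∨ (B < a ∧ a ≤ A ∧ A < b)

instance (a b A B : ℤ) : Decidable (xXxXP a b A B) := by
  unfold xXxXP; infer_instance

/-- Swap the two entries `(i,0)` and `(i,1)` of row `i`. -/
def swapRow (i : ℕ) (T : Fill) : Fill := fun c =>
  if c = (i, 0) then T (i, 1) else if c = (i, 1) then T (i, 0) else T c

/-- The while-loop of the algorithm: as long as rows `j` (bottom) and `j+1`
(top) satisfy the `xXxX` condition, swap the two entries of row `j+1` and
move up; `f` is a fuel bound on the number of iterations. -/
def tauLoop : ℕ → ℕ → Fill → Fill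
  | 0, _, T => T
  | f + 1, j, T =>
      if xXxXP (T (j + 1, 0)) (T (j + 1, 1)) (T (j, 0)) (T (j, 1)) then
        tauLoop f (j + 1) (swapRow (j + 1) T)
      else T

/-- The map `τ` of the algorithm for `μ = (μ'₁, …, μ'ₖ, 2^l)` (`k` bottom
rows forming `μ'`, then `l` rows of length `2`): if the junction rows `k-1`
(top row of `μ'`) and `k` (first row of the tail) satisfy `xAx`, swap row
`k` and run the `xXxX` while-loop upwards; otherwise do nothing. -/
def tau (k l : ℕ) (T : Fill) : Fill :=
  if xAxP (T (k, 0)) (T (k, 1)) (T (k - 1, 0)) then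
    tauLoop (l - 1) k (swapRow k T)
  else T

/-! Auxiliary lemmas -/

lemma xAxP_swap {a b A : ℤ} : xAxP b a A ↔ xAxP a b A := by
  unfold xAxP; omega

lemma xXxXP_swap_top {a b A B : ℤ} : xXxXP b a A B ↔ xXxXP a b A B := by
  unfold xXxXP; omega

lemma xXxXP_swap_bot {a b A B : ℤ} : xXxXP a b B A ↔ xXxXP a b A B := by
  unfold xXxXP; omega

lemma swapRow_fst (i : ℕ) (T : Fill) (c : ℕ × ℕ) (h : c.1 ≠ i) :
    swapRow i T c = T c := by
  obtain ⟨a, b⟩ := c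
  simp only [swapRow]
  rw [if_neg, if_neg] <;> simp_all [Prod.ext_iff]

lemma swapRow_zero (i : ℕ) (T : Fill) : swapRow i T (i, 0) = T (i, 1) := by
  simp [swapRow]

lemma swapRow_one (i : ℕ) (T : Fill) : swapRow i T (i, 1) = T (i, 0) := by
  simp [swapRow]

lemma swapRow_swapRow (i : ℕ) (T : Fill) : swapRow i (swapRow i T) = T := by
  funext c
  by_cases h : c.1 = i
  · obtain ⟨a, b⟩ := c
    simp only at h; subst h
    by_cases h0 : b = 0
    · subst h0; rw [swapRow_zero, swapRow_one]
    · by_cases h1 : b = 1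
      · subst h1; rw [swapRow_one, swapRow_zero]
      · have : swapRow a T (a, b) = T (a, b) := by
          simp [swapRow, Prod.ext_iff, h0, h1]
        rw [show ((a, b) : ℕ × ℕ) = ((a, b) : ℕ × ℕ) from rfl]
        simp [swapRow, Prod.ext_iff, h0, h1]
  · rw [swapRow_fst _ _ _ h, swapRow_fst _ _ _ h]

lemma swapRow_comm {i i' : ℕ} (h : i ≠ i') (T : Fill) :
    swapRow i (swapRow i' T) = swapRow i' (swapRow i T) := by
  funext c
  by_cases hi : c.1 = i
  · obtain ⟨a, b⟩ := c; simp only at hi; subst hi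
    have ha : (a : ℕ) ≠ i' := h
    by_cases h0 : b = 0
    · subst h0
      rw [swapRow_zero, swapRow_fst _ _ _ (by simpa using ha),
        swapRow_fst _ _ _ (by simpa using ha), swapRow_zero]
    · by_cases h1 : b = 1
      · subst h1
        rw [swapRow_one, swapRow_fst _ _ _ (by simpa using ha),
          swapRow_fst _ _ _ (by simpa using ha), swapRow_one]
      · have e1 : swapRow a T (a, b) = T (a, b) := by
          simp [swapRow, Prod.ext_iff, h0, h1]
        have e2 : swapRow a (swapRow i' T) (a, b) = swapRow i' T (a, b) := by
          simp [swapRow, Prod.ext_iff, h0, h1]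
        rw [e2, swapRow_fst _ _ _ (by simpa using ha),
          swapRow_fst _ _ _ (by simpa using ha), e1]
  · by_cases hi' : c.1 = i'
    · obtain ⟨a, b⟩ := c; simp only at hi hi'; subst hi'
      have ha : (a : ℕ) ≠ i := fun hh => hi hh
      by_cases h0 : b = 0
      · subst h0
        rw [swapRow_fst _ _ _ (by simpa using ha), swapRow_zero, swapRow_zero,
          swapRow_fst _ _ _ (by simpa using ha)]
      · by_cases h1 : b = 1
        · subst h1
          rw [swapRow_fst _ _ _ (by simpa using ha), swapRow_one, swapRow_one,
            swapRow_fst _ _ _ (by simpa using ha)]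
        · have e1 : swapRow a T (a, b) = T (a, b) := by
            simp [swapRow, Prod.ext_iff, h0, h1]
          have e2 : swapRow a (swapRow i T) (a, b) = swapRow i T (a, b) := by
            simp [swapRow, Prod.ext_iff, h0, h1]
          rw [swapRow_fst _ _ _ (by simpa using ha), e1, e2,
            swapRow_fst _ _ _ (by simpa using ha)]
    · rw [swapRow_fst _ _ _ hi, swapRow_fst _ _ _ hi', swapRow_fst _ _ _ hi',
        swapRow_fst _ _ _ hi]

lemma tauLoop_low : ∀ (f j : ℕ) (T : Fill) (i m : ℕ), i ≤ j →
    tauLoop f j T (i, m) = T (i, m)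
  | 0, _, _, _, _, _ => rfl
  | f + 1, j, T, i, m, h => by
    rw [tauLoop]
    split
    · rw [tauLoop_low f (j + 1) _ i m (by omega),
        swapRow_fst _ _ _ (by simp; omega)]
    · rfl

lemma tauLoop_swap_comm : ∀ (f j i : ℕ) (T : Fill), i < j →
    tauLoop f j (swapRow i T) = swapRow i (tauLoop f j T)
  | 0, _, _, _, _ => rfl
  | f + 1, j, i, T, h => by
    have hij : (j : ℕ) ≠ i := by omega
    have hij1 : (j + 1 : ℕ) ≠ i := by omega
    rw [tauLoop, tauLoop]
    rw [swapRow_fst _ _ _ (by simp; omega), swapRow_fst _ _ _ (by simp; omega),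
      swapRow_fst _ _ _ (by simp; omega), swapRow_fst _ _ _ (by simp; omega)]
    split
    · rw [swapRow_comm (by omega : (j + 1 : ℕ) ≠ i),
        tauLoop_swap_comm f (j + 1) i _ (by omega)]
    · rfl

lemma tauLoop_inv : ∀ (f j : ℕ) (T : Fill),
    tauLoop f j (swapRow j (tauLoop f j (swapRow j T))) = T
  | 0, j, T => by
    show swapRow j (swapRow j T) = T
    exact swapRow_swapRow j T
  | f + 1, j, T => by
    have hU0 : swapRow j T (j + 1, 0) = T (j + 1, 0) :=
      swapRow_fst _ _ _ (by simp)
    have hU1 : swapRow j T (j + 1, 1) = T (j + 1, 1) :=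
      swapRow_fst _ _ _ (by simp)
    by_cases hc : xXxXP (T (j + 1, 0)) (T (j + 1, 1)) (T (j, 0)) (T (j, 1))
    · -- condition holds for the inner run
      have hcond : xXxXP (swapRow j T (j + 1, 0)) (swapRow j T (j + 1, 1))
          (swapRow j T (j, 0)) (swapRow j T (j, 1)) := by
        rw [hU0, hU1, swapRow_zero, swapRow_one]
        exact xXxXP_swap_bot.mpr hc
      have hin : tauLoop (f + 1) j (swapRow j T) =
          tauLoop f (j + 1) (swapRow (j + 1) (swapRow j T)) := by
        rw [tauLoop, if_pos hcond]
      rw [hin]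
      set R := tauLoop f (j + 1) (swapRow (j + 1) (swapRow j T)) with hR
      have hR10 : R (j + 1, 0) = T (j + 1, 1) := by
        rw [hR, tauLoop_low f (j + 1) _ _ _ le_rfl, swapRow_zero, hU1]
      have hR11 : R (j + 1, 1) = T (j + 1, 0) := by
        rw [hR, tauLoop_low f (j + 1) _ _ _ le_rfl, swapRow_one, hU0]
      have hRj0 : R (j, 0) = T (j, 1) := by
        rw [hR, tauLoop_low f (j + 1) _ _ _ (by omega),
          swapRow_fst _ _ _ (by simp), swapRow_zero]
      have hRj1 : R (j, 1) = T (j, 0) := by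
        rw [hR, tauLoop_low f (j + 1) _ _ _ (by omega),
          swapRow_fst _ _ _ (by simp), swapRow_one]
      have hcond2 : xXxXP (swapRow j R (j + 1, 0)) (swapRow j R (j + 1, 1))
          (swapRow j R (j, 0)) (swapRow j R (j, 1)) := by
        rw [swapRow_fst _ _ _ (by simp), swapRow_fst _ _ _ (by simp),
          swapRow_zero, swapRow_one, hR10, hR11, hRj0, hRj1]
        exact xXxXP_swap_top.mpr hc
      rw [tauLoop, if_pos hcond2,
        swapRow_comm (by omega : (j + 1 : ℕ) ≠ j),
        tauLoop_swap_comm f (j + 1) j _ (by omega),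
        tauLoop_inv f (j + 1) (swapRow j T), swapRow_swapRow]
    · -- condition fails for the inner run
      have hcond : ¬ xXxXP (swapRow j T (j + 1, 0)) (swapRow j T (j + 1, 1))
          (swapRow j T (j, 0)) (swapRow j T (j, 1)) := by
        rw [hU0, hU1, swapRow_zero, swapRow_one]
        exact fun h => hc (xXxXP_swap_bot.mp h)
      have hin : tauLoop (f + 1) j (swapRow j T) = swapRow j T := by
        rw [tauLoop, if_neg hcond]
      rw [hin, swapRow_swapRow, tauLoop, if_neg hc]

lemma mem_cells {μ : List ℕ} {c : ℕ × ℕ} :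
    c ∈ cells μ ↔ c.1 < μ.length ∧ c.2 < rowLen μ c.1 := by
  obtain ⟨i, j⟩ := c
  simp only [cells, Finset.mem_biUnion, Finset.mem_range, Finset.mem_image]
  constructor
  · rintro ⟨i', hi', j', hj', h⟩
    obtain ⟨rfl, rfl⟩ := Prod.mk.injEq .. ▸ h
    exact ⟨hi', hj'⟩
  · rintro ⟨h1, h2⟩
    exact ⟨i, h1, j, h2, rfl⟩

/-- The column-swap map on indices. -/
def swapIdx (i : ℕ) (c : ℕ × ℕ) : ℕ × ℕ :=
  if c = (i, 0) then (i, 1) else if c = (i, 1) then (i, 0) else c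

lemma swapIdx_swapIdx (i : ℕ) (c : ℕ × ℕ) : swapIdx i (swapIdx i c) = c := by
  unfold swapIdx
  split_ifs <;> simp_all

lemma swapRow_eq_comp (i : ℕ) (U : Fill) (c : ℕ × ℕ) :
    swapRow i U c = U (swapIdx i c) := by
  unfold swapRow swapIdx
  split_ifs <;> rfl

lemma card_filter_swap (μ : List ℕ) (i : ℕ) (U : Fill)
    (h : ((i, 0) ∈ cells μ ∧ (i, 1) ∈ cells μ) ∨
      ((i, 0) ∉ cells μ ∧ (i, 1) ∉ cells μ)) (v : ℤ) :
    ((cells μ).filter fun c => U c = v).card =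
      ((cells μ).filter fun c => swapRow i U c = v).card := by
  rcases h with ⟨h0, h1⟩ | ⟨h0, h1⟩
  · have hmem : ∀ c ∈ cells μ, swapIdx i c ∈ cells μ := by
      intro c hc
      unfold swapIdx
      split_ifs <;> assumption
    refine Finset.card_nbij' (swapIdx i) (swapIdx i) ?_ ?_ ?_ ?_
    · intro c hc
      simp only [Finset.mem_coe, Finset.mem_filter] at hc ⊢
      refine ⟨hmem c hc.1, ?_⟩
      rw [swapRow_eq_comp, swapIdx_swapIdx]
      exact hc.2
    · intro c hc
      simp only [Finset.mem_coe, Finset.mem_filter] at hc ⊢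
      refine ⟨hmem c hc.1, ?_⟩
      rw [← swapRow_eq_comp i U c]
      exact hc.2
    · intro c _; exact swapIdx_swapIdx i c
    · intro c _; exact swapIdx_swapIdx i c
  · have heq : ((cells μ).filter fun c => U c = v) =
        (cells μ).filter fun c => swapRow i U c = v := by
      apply Finset.filter_congr
      intro c hc
      have hc0 : c ≠ (i, 0) := fun h => h0 (h ▸ hc)
      have hc1 : c ≠ (i, 1) := fun h => h1 (h ▸ hc)
      simp only [swapRow, if_neg hc0, if_neg hc1]
    rw [heq]

lemma card_tauLoop (μ : List ℕ) : ∀ (f j : ℕ) (U : Fill),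
    (∀ i, j < i → ((i, 0) ∈ cells μ ∧ (i, 1) ∈ cells μ) ∨
      ((i, 0) ∉ cells μ ∧ (i, 1) ∉ cells μ)) →
    ∀ v, ((cells μ).filter fun c => U c = v).card =
      ((cells μ).filter fun c => tauLoop f j U c = v).card
  | 0, _, _, _, _ => rfl
  | f + 1, j, U, hgood, v => by
    rw [tauLoop]
    split
    · rw [card_filter_swap μ (j + 1) U (hgood _ (by omega)) v]
      exact card_tauLoop μ f (j + 1) _ (fun i hi => hgood i (by omega)) v
    · rfl

/-- for `μ = (μ'₁,…,μ'ₖ,2^l)` with `μ'ₖ ≥ 2`, the map `τ` of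
the swapping algorithm is an involution on fillings of `μ`; moreover it
preserves the evaluation (the multiset of entries of the cells of `μ`),
hence is a bijection of the set of fillings of `μ` of any fixed
evaluation. -/
theorem tau_involution (μ' : List ℕ) (l : ℕ) (hne : μ' ≠ [])
    (hsort : List.Pairwise (· ≥ ·) μ') (hlast : 2 ≤ μ'.getLast hne) (T : Fill) :
    tau μ'.length l (tau μ'.length l T) = T ∧
    ∀ v : ℤ,
      (((cells (μ' ++ List.replicate l 2)).filter fun c => T c = v)).card =
      (((cells (μ' ++ List.replicate l 2)).filter
          fun c => tau μ'.length l T c = v)).card := by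
  have hk1 : 1 ≤ μ'.length := List.length_pos_iff.mpr hne
  have hlen : (μ' ++ List.replicate l 2).length = μ'.length + l := by simp
  have hrow2 : ∀ i, μ'.length ≤ i → i < μ'.length + l →
      rowLen (μ' ++ List.replicate l 2) i = 2 := by
    intro i h1 h2
    rw [rowLen, List.getD_append_right μ' (List.replicate l 2) 0 i h1,
      List.getD_eq_getElem _ _ (by simp; omega), List.getElem_replicate]
  have hgood : ∀ i, μ'.length ≤ i →
      ((i, 0) ∈ cells (μ' ++ List.replicate l 2) ∧
        (i, 1) ∈ cells (μ' ++ List.replicate l 2)) ∨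
      ((i, 0) ∉ cells (μ' ++ List.replicate l 2) ∧
        (i, 1) ∉ cells (μ' ++ List.replicate l 2)) := by
    intro i hi
    by_cases h : i < μ'.length + l
    · left
      constructor <;> (rw [mem_cells]; constructor)
      · omega
      · rw [hrow2 i hi h]; omega
      · omega
      · rw [hrow2 i hi h]; omega
    · right
      constructor <;> (rw [mem_cells]; push_neg; intro h'; omega)
  by_cases hc : xAxP (T (μ'.length, 0)) (T (μ'.length, 1)) (T (μ'.length - 1, 0))
  · have htau : tau μ'.length l T =
        tauLoop (l - 1) μ'.length (swapRow μ'.length T) := by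
      rw [tau, if_pos hc]
    rw [htau]
    set R := tauLoop (l - 1) μ'.length (swapRow μ'.length T) with hR
    have hRk0 : R (μ'.length, 0) = T (μ'.length, 1) := by
      rw [hR, tauLoop_low _ _ _ _ _ le_rfl, swapRow_zero]
    have hRk1 : R (μ'.length, 1) = T (μ'.length, 0) := by
      rw [hR, tauLoop_low _ _ _ _ _ le_rfl, swapRow_one]
    have hRk2 : R (μ'.length - 1, 0) = T (μ'.length - 1, 0) := by
      rw [hR, tauLoop_low _ _ _ _ _ (by omega),
        swapRow_fst _ _ _ (by simp; omega)]
    have hc2 : xAxP (R (μ'.length, 0)) (R (μ'.length, 1))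
        (R (μ'.length - 1, 0)) := by
      rw [hRk0, hRk1, hRk2]; exact xAxP_swap.mpr hc
    constructor
    · rw [tau, if_pos hc2, hR]
      exact tauLoop_inv (l - 1) μ'.length T
    · intro v
      rw [hR, ← card_tauLoop (μ' ++ List.replicate l 2) (l - 1) μ'.length _
        (fun i hi => hgood i (by omega)) v]
      exact card_filter_swap (μ' ++ List.replicate l 2) μ'.length T
        (hgood μ'.length le_rfl) v
  · have htau : tau μ'.length l T = T := by rw [tau, if_neg hc]
    rw [htau]
    exact ⟨htau, fun v => rfl⟩
end
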